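/- Suppose M satisfies conditions (*) and (**), λ ≠ 0 and λ ≠ 1, and let MC_λ(M) = (Ñ_r,…,Ñ_1). Then for every k ∈ {1,…,r} and every integer l ≥ 1, dim ker((Ñ_k − λ·id)^l) − dim ker((Ñ_k − λ·id)^{l−1}) = dim ker((M_k − 1)^{l+1}) − dim ker((M_k − 1)^l). (Equivalently, every Jordan block J(1, l) of M_k with l ≥ 2 contributes a Jordan block J(λ, l−1) to Ñ_k, and these account for all Jordan blocks of Ñ_k with eigenvalue λ.) -/

import Mathlib

open Module LinearMap Submodule

/-- The coefficient endomorphism appearing in the `k`-th row of the convolution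
operator `N_k`. -/
noncomputable def convCoeff {V : Type*} [AddCommGroup V] [Module ℂ V] {r : ℕ}
    (M : Fin r → Module.End ℂ V) (lam : ℂ) (k i : Fin r) : Module.End ℂ V :=
  if i < k then M i - 1 else if i = k then lam • M k else lam • (M i - 1)

/-- The convolution operator `N_k` on `V^r`: it leaves every component `v_j` with
`j ≠ k` unchanged and replaces the `k`-th component by
`(M_1 − 1)v_1 + ⋯ + (M_{k−1} − 1)v_{k−1} + λ M_k v_k + λ(M_{k+1} − 1)v_{k+1} + ⋯ + λ(M_r − 1)v_r`. -/
noncomputable def convOp {V : Type*} [AddCommGroup V] [Module ℂ V] {r : ℕ}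
    (M : Fin r → Module.End ℂ V) (lam : ℂ) (k : Fin r) :
    Module.End ℂ (Fin r → V) :=
  LinearMap.pi fun j =>
    if j = k then ∑ i : Fin r, convCoeff M lam k i ∘ₗ LinearMap.proj i
    else LinearMap.proj j

/-- The subspace `K_k = {(0,…,0,u,0,…,0)ᵀ : u ∈ ker(M_k − 1)}` (`u` in the `k`-th slot). -/
noncomputable def Ksub {V : Type*} [AddCommGroup V] [Module ℂ V] {r : ℕ}
    (M : Fin r → Module.End ℂ V) (k : Fin r) : Submodule ℂ (Fin r → V) :=
  Submodule.pi Set.univ fun j => if j = k then LinearMap.ker (M k - 1) else ⊥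

/-- The subspace `L = ⋂_k ker(N_k − 1)`. -/
noncomputable def Lsub {V : Type*} [AddCommGroup V] [Module ℂ V] {r : ℕ}
    (M : Fin r → Module.End ℂ V) (lam : ℂ) : Submodule ℂ (Fin r → V) :=
  ⨅ k : Fin r, LinearMap.ker (convOp M lam k - 1)

/-- The subspace `K + L` with `K = K_1 ⊕ ⋯ ⊕ K_r`. -/
noncomputable def KLsub {V : Type*} [AddCommGroup V] [Module ℂ V] {r : ℕ}
    (M : Fin r → Module.End ℂ V) (lam : ℂ) : Submodule ℂ (Fin r → V) :=
  (⨆ k : Fin r, Ksub M k) ⊔ Lsub M lam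

/-- The middle convolution operator `Ñ_k` induced by `N_k` on `V^r/(K + L)`. -/
noncomputable def mcOp {V : Type*} [AddCommGroup V] [Module ℂ V] {r : ℕ}
    (M : Fin r → Module.End ℂ V) (lam : ℂ)
    (h : ∀ k : Fin r, KLsub M lam ≤ (KLsub M lam).comap (convOp M lam k))
    (k : Fin r) : Module.End ℂ ((Fin r → V) ⧸ KLsub M lam) :=
  Submodule.mapQ _ _ (convOp M lam k) (h k)

/-- Condition (*): there is no nonzero `v ∈ V` fixed by all `M_j`, `j ≠ i`, which is an
eigenvector of `M_i`. -/
def CondStar {V : Type*} [AddCommGroup V] [Module ℂ V] {r : ℕ}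
    (M : Fin r → Module.End ℂ V) : Prop :=
  ∀ i : Fin r,
    ¬ ∃ v : V, v ≠ 0 ∧ (∀ j : Fin r, j ≠ i → M j v = v) ∧ ∃ a : ℂ, M i v = a • v

/-- Condition (**): there is no codimension-one subspace `W ⊆ V` invariant under all `M_j`
with `(M_j − 1)(V) ⊆ W` for all `j ≠ i`. -/
def CondStarStar {V : Type*} [AddCommGroup V] [Module ℂ V] {r : ℕ}
    (M : Fin r → Module.End ℂ V) : Prop :=
  ∀ i : Fin r,
    ¬ ∃ W : Submodule ℂ V, Module.finrank ℂ (V ⧸ W) = 1 ∧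
      (∀ j : Fin r, W.map (M j) ≤ W) ∧
      ∀ j : Fin r, j ≠ i → LinearMap.range (M j - 1) ≤ W

section Aux

variable {V : Type*} [AddCommGroup V] [Module ℂ V] {r : ℕ}
  (M : Fin r → Module.End ℂ V) (lam : ℂ) (k : Fin r)

lemma convOp_apply_self (x : Fin r → V) :
    convOp M lam k x k = ∑ i : Fin r, convCoeff M lam k i (x i) := by
  simp [convOp]

lemma convOp_apply_ne (x : Fin r → V) {j : Fin r} (hj : j ≠ k) :
    convOp M lam k x j = x j := by
  simp [convOp, hj]

lemma A_apply_ne (x : Fin r → V) {j : Fin r} (hj : j ≠ k) :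
    (convOp M lam k - lam • 1) x j = (1 - lam) • x j := by
  simp [convOp_apply_ne M lam k x hj, sub_smul]

lemma A_single (v : V) :
    (convOp M lam k - lam • 1) (Pi.single k v) = Pi.single k (lam • ((M k - 1) v)) := by
  funext j
  by_cases hj : j = k
  · subst hj
    simp only [LinearMap.sub_apply, LinearMap.smul_apply, Module.End.one_apply,
      convOp_apply_self, Pi.sub_apply, Pi.smul_apply, Pi.single_eq_same]
    rw [Finset.sum_eq_single j]
    · simp [convCoeff, smul_sub]
    · intro i _ hi
      rw [Pi.single_eq_of_ne' hi.symm]  -- careful: Pi.single j v i with i ≠ j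
      simp
    · simp
  · rw [A_apply_ne M lam k _ hj, Pi.single_eq_of_ne hj, Pi.single_eq_of_ne hj, smul_zero]

lemma A_pow_apply_ne (l : ℕ) (x : Fin r → V) {j : Fin r} (hj : j ≠ k) :
    ((convOp M lam k - lam • 1) ^ l) x j = (1 - lam) ^ l • x j := by
  induction l generalizing x with
  | zero => simp
  | succ n ih =>
      rw [pow_succ, Module.End.mul_apply, ih, A_apply_ne M lam k x hj, smul_smul, ← pow_succ]

lemma A_pow_single (l : ℕ) (v : V) :
    ((convOp M lam k - lam • 1) ^ l) (Pi.single k v) =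
      Pi.single k (lam ^ l • (((M k - 1) ^ l) v)) := by
  induction l with
  | zero => simp
  | succ n ih =>
      rw [pow_succ', Module.End.mul_apply, ih, A_single]
      rw [map_smul, smul_smul, ← pow_succ', ← Module.End.mul_apply, ← pow_succ']


lemma Ksub_eq_map :
    Ksub M k = Submodule.map (LinearMap.single ℂ (fun _ : Fin r => V) k)
      (LinearMap.ker (M k - 1)) := by
  ext x
  constructor
  · intro hx
    rw [Ksub, Submodule.mem_pi] at hx
    have hk := hx k (Set.mem_univ k)
    rw [if_pos rfl] at hk
    refine ⟨x k, hk, ?_⟩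
    funext j
    by_cases hj : j = k
    · subst hj; simp
    · have := hx j (Set.mem_univ j)
      rw [if_neg hj, Submodule.mem_bot] at this
      simp [LinearMap.coe_single, Pi.single_eq_of_ne hj, this]
  · rintro ⟨u, hu, rfl⟩
    rw [Ksub, Submodule.mem_pi]
    intro j _
    by_cases hj : j = k
    · subst hj; simpa [LinearMap.coe_single] using hu
    · simp [LinearMap.coe_single, Pi.single_eq_of_ne hj, hj]

lemma iSup_Ksub :
    (⨆ j : Fin r, Ksub M j) = Submodule.pi Set.univ fun j => LinearMap.ker (M j - 1) := by
  apply le_antisymm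
  · refine iSup_le fun j => ?_
    intro x hx
    rw [Ksub, Submodule.mem_pi] at hx
    rw [Submodule.mem_pi]
    intro i _
    have := hx i (Set.mem_univ i)
    by_cases hi : i = j
    · subst hi; rwa [if_pos rfl] at this
    · rw [if_neg hi, Submodule.mem_bot] at this
      simp [this]
  · intro x hx
    rw [Submodule.mem_pi] at hx
    have : x = ∑ j : Fin r, Pi.single j (x j) := by
      rw [Finset.univ_sum_single]
    rw [this]
    refine Submodule.sum_mem _ fun j _ => ?_
    refine Submodule.mem_iSup_of_mem j ?_
    rw [Ksub, Submodule.mem_pi]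
    intro i _
    by_cases hi : i = j
    · subst hi; simpa using hx i (Set.mem_univ i)
    · simp [Pi.single_eq_of_ne hi, hi]

lemma mem_Lsub_iff (x : Fin r → V) :
    x ∈ Lsub M lam ↔ ∀ j : Fin r, ∑ i : Fin r, convCoeff M lam j i (x i) = x j := by
  rw [Lsub, Submodule.mem_iInf]
  refine forall_congr' fun j => ?_
  rw [LinearMap.mem_ker]
  constructor
  · intro hx
    have h1 : convOp M lam j x = x := by
      have := sub_eq_zero.mp (by simpa [LinearMap.sub_apply] using hx)
      simpa using this
    have := congrFun h1 j
    rwa [convOp_apply_self] at this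
  · intro hx
    have h1 : convOp M lam j x = x := by
      funext i
      by_cases hi : i = j
      · subst hi; rw [convOp_apply_self]; exact hx
      · exact convOp_apply_ne M lam j x hi
    simp [LinearMap.sub_apply, h1]

lemma Mk_of_single_mem_KL (hlam0 : lam ≠ 0) (hlam1 : lam ≠ 1) (hstar : CondStar M)
    {v : V} (hv : Pi.single k v ∈ KLsub M lam) : M k v = v := by
  rw [KLsub, Submodule.mem_sup] at hv
  obtain ⟨a, ha, b, hb, hab⟩ := hv
  rw [iSup_Ksub, Submodule.mem_pi] at ha
  have hker0 : ∀ i, (M i - 1) (a i) = 0 := fun i => ha i (Set.mem_univ i)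
  have haker : ∀ i, M i (a i) = a i := by
    intro i
    have := hker0 i
    rw [LinearMap.sub_apply, Module.End.one_apply, sub_eq_zero] at this
    exact this
  rw [mem_Lsub_iff] at hb
  set z : V := v - a k with hzdef
  have hbk : b k = z := by
    have := congrFun hab k
    simp only [Pi.add_apply, Pi.single_eq_same] at this
    rw [hzdef, ← this]
    abel
  have hbne : ∀ i, i ≠ k → b i = -(a i) := by
    intro i hi
    have := congrFun hab i
    simp only [Pi.add_apply, Pi.single_eq_of_ne hi] at this
    linear_combination (norm := abel) this
  -- equation at k
  have hk1 : lam • M k z = z := by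
    have heq := hb k
    rw [Finset.sum_eq_single k] at heq
    · rw [hbk] at heq
      simpa [convCoeff] using heq
    · intro i _ hi
      rw [hbne i hi, map_neg, neg_eq_zero]
      by_cases hik : i < k
      · simpa [convCoeff, hik] using hker0 i
      · simp only [convCoeff, if_neg hik, if_neg hi]
        rw [LinearMap.smul_apply, hker0 i, smul_zero]
    · simp
  have hMkz : M k z = lam⁻¹ • z := by
    rw [eq_comm, inv_smul_eq_iff₀ hlam0, eq_comm]
    exact hk1
  have hMk1z : (M k - 1) z = (lam⁻¹ - 1) • z := by
    rw [LinearMap.sub_apply, Module.End.one_apply, hMkz, sub_smul, one_smul]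
  -- equations at j ≠ k
  have hstep2 : ∀ j, j ≠ k → M j z = z := by
    intro j hjk
    have heq := hb j
    have hsum : ∑ i, convCoeff M lam j i (b i) =
        convCoeff M lam j j (b j) + convCoeff M lam j k (b k) := by
      have h1 := Finset.sum_pair (f := fun i => convCoeff M lam j i (b i)) hjk
      rw [← h1]
      refine (Finset.sum_subset (Finset.subset_univ _) ?_).symm
      intro i _ hi
      simp only [Finset.mem_insert, Finset.mem_singleton] at hi
      push_neg at hi
      rw [hbne i hi.2, map_neg, neg_eq_zero]
      by_cases hij : i < j
      · simpa [convCoeff, hij] using hker0 i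
      · simp only [convCoeff, if_neg hij, if_neg hi.1]
        rw [LinearMap.smul_apply, hker0 i, smul_zero]
    set c : ℂ := if k < j then 1 else lam with hc
    have hc0 : c ≠ 0 := by
      rw [hc]; split_ifs
      · exact one_ne_zero
      · exact hlam0
    have hcoeff : convCoeff M lam j k = c • (M k - 1) := by
      rw [convCoeff, hc]
      by_cases h1 : k < j
      · rw [if_pos h1, if_pos h1, one_smul]
      · rw [if_neg h1, if_neg h1, if_neg hjk.symm]
    have hjj : convCoeff M lam j j (b j) = -(lam • a j) := by
      have : convCoeff M lam j j = lam • M j := by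
        rw [convCoeff, if_neg (lt_irrefl j), if_pos rfl]
      rw [this, hbne j hjk, LinearMap.smul_apply, map_neg, haker j, smul_neg]
    rw [hsum, hjj, hbk, hcoeff, hbne j hjk] at heq
    have heq2 : (c * (lam⁻¹ - 1)) • z = (lam - 1) • a j := by
      rw [LinearMap.smul_apply, hMk1z, smul_smul] at heq
      rw [sub_smul, one_smul]
      linear_combination (norm := abel) heq
    set s : ℂ := (lam - 1)⁻¹ * (c * (lam⁻¹ - 1)) with hs
    have hlam1' : lam - 1 ≠ 0 := sub_ne_zero.mpr hlam1
    have hs0 : s ≠ 0 := by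
      rw [hs]
      refine mul_ne_zero (inv_ne_zero hlam1') (mul_ne_zero hc0 ?_)
      rw [sub_ne_zero]
      exact fun hinv => hlam1 (by rw [← inv_inv lam, hinv, inv_one])
    have haj : a j = s • z := by
      rw [hs, mul_smul, heq2, inv_smul_smul₀ hlam1']
    have : (M j - 1) z = 0 := by
      have h0 := hker0 j
      rw [haj, map_smul, smul_eq_zero] at h0
      exact h0.resolve_left hs0
    rw [LinearMap.sub_apply, Module.End.one_apply, sub_eq_zero] at this
    exact this
  have hz0 : z = 0 := by
    by_contra hz0
    exact hstar k ⟨z, hz0, hstep2, ⟨lam⁻¹, hMkz⟩⟩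
  have hva : v = a k := by
    rw [hzdef, sub_eq_zero] at hz0
    exact hz0
  rw [hva]
  exact haker k

lemma ker_A_pow (hlam0 : lam ≠ 0) (hlam1 : lam ≠ 1) {l : ℕ} (hl : 1 ≤ l) :
    LinearMap.ker ((convOp M lam k - lam • 1) ^ l) =
      Submodule.map (LinearMap.single ℂ (fun _ : Fin r => V) k)
        (LinearMap.ker ((M k - 1) ^ l)) := by
  have h10 : (1 - lam) ^ l ≠ 0 := pow_ne_zero _ (sub_ne_zero.mpr (Ne.symm hlam1))
  ext x
  constructor
  · intro hx
    rw [LinearMap.mem_ker] at hx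
    have hzero : ∀ j, j ≠ k → x j = 0 := by
      intro j hj
      have hj2 := congrFun hx j
      rw [A_pow_apply_ne M lam k l x hj, Pi.zero_apply] at hj2
      exact (smul_eq_zero.mp hj2).resolve_left h10
    have hxs : x = Pi.single k (x k) := by
      funext j
      by_cases hj : j = k
      · subst hj; simp
      · rw [Pi.single_eq_of_ne hj, hzero j hj]
    refine Submodule.mem_map.mpr ⟨x k, ?_, by rw [LinearMap.coe_single]; exact hxs.symm⟩
    rw [LinearMap.mem_ker]
    have hx2 : ((convOp M lam k - lam • 1) ^ l) (Pi.single k (x k)) = 0 := by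
      rw [← hxs]; exact hx
    rw [A_pow_single] at hx2
    have h5 : lam ^ l • (((M k - 1) ^ l) (x k)) = 0 := by
      apply Pi.single_injective k
      rw [hx2, Pi.single_zero]
    exact (smul_eq_zero.mp h5).resolve_left (pow_ne_zero _ hlam0)
  · intro hx
    obtain ⟨w, hw, rfl⟩ := Submodule.mem_map.mp hx
    rw [LinearMap.mem_ker] at hw ⊢
    rw [LinearMap.coe_single, A_pow_single, hw, smul_zero, Pi.single_zero]

lemma mc_pow_mk (h : ∀ k : Fin r, KLsub M lam ≤ (KLsub M lam).comap (convOp M lam k))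
    (l : ℕ) (x : Fin r → V) :
    ((mcOp M lam h k - lam • 1) ^ l) (Submodule.Quotient.mk x) =
      Submodule.Quotient.mk (((convOp M lam k - lam • 1) ^ l) x) := by
  induction l with
  | zero => simp
  | succ n ih =>
      rw [pow_succ', Module.End.mul_apply, ih, pow_succ' (convOp M lam k - lam • 1),
        Module.End.mul_apply]
      rw [LinearMap.sub_apply, LinearMap.smul_apply, Module.End.one_apply, mcOp,
        Submodule.mapQ_apply, LinearMap.sub_apply, LinearMap.smul_apply, Module.End.one_apply,
        ← Submodule.Quotient.mk_smul, ← Submodule.Quotient.mk_sub]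

lemma ker_mc_pow (hlam0 : lam ≠ 0) (hlam1 : lam ≠ 1) (hstar : CondStar M)
    [FiniteDimensional ℂ V]
    (h : ∀ k : Fin r, KLsub M lam ≤ (KLsub M lam).comap (convOp M lam k)) (l : ℕ) :
    LinearMap.ker ((mcOp M lam h k - lam • 1) ^ l) =
      Submodule.map (KLsub M lam).mkQ
        (Submodule.map (LinearMap.single ℂ (fun _ : Fin r => V) k)
          (LinearMap.ker ((M k - 1) ^ (l + 1)))) := by
  set F := convOp M lam k - lam • (1 : Module.End ℂ (Fin r → V)) with hF
  set S := KLsub M lam with hSdef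
  have hSA : ∀ x ∈ S, F x ∈ S := by
    intro x hx
    have h1 : convOp M lam k x ∈ S := h k hx
    have h2 : lam • x ∈ S := Submodule.smul_mem _ lam hx
    simpa [hF] using Submodule.sub_mem _ h1 h2
  have hSA' : ∀ m, ∀ x ∈ S, (F ^ m) x ∈ S := by
    intro m
    induction m with
    | zero => intro x hx; simpa using hx
    | succ n ih =>
        intro x hx
        rw [pow_succ', Module.End.mul_apply]
        exact hSA _ (ih x hx)
  obtain ⟨n0, hn0⟩ := Filter.eventually_atTop.mp
    ((F.eventually_isCompl_ker_pow_range_pow).and F.eventually_iSup_ker_pow_eq)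
  set n := max n0 1 with hn
  obtain ⟨hcompl, hsup⟩ := hn0 n (le_max_left _ _)
  have hn1 : 1 ≤ n := le_max_right _ _
  have hkerle : ∀ m, LinearMap.ker (F ^ m) ≤ LinearMap.ker (F ^ n) := by
    intro m
    rw [← hsup]
    exact le_iSup (fun i => LinearMap.ker (F ^ i)) m
  set E := LinearMap.ker (F ^ n) with hE
  set R := LinearMap.range (F ^ n) with hR
  have hinj : ∀ m x, x ∈ R → (F ^ m) x = 0 → x = 0 := by
    intro m x hxR hx0
    have h1 : x ∈ E := hkerle m (LinearMap.mem_ker.mpr hx0)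
    have h2 : x ∈ E ⊓ R := ⟨h1, hxR⟩
    rw [hcompl.inf_eq_bot, Submodule.mem_bot] at h2
    exact h2
  have hRF : ∀ x ∈ R, F x ∈ R := by
    rintro x ⟨y, rfl⟩
    exact ⟨F y, by rw [← Module.End.mul_apply, ← Module.End.mul_apply, pow_mul_comm']⟩
  have hRFm : ∀ m, ∀ x ∈ R, (F ^ m) x ∈ R := by
    intro m
    induction m with
    | zero => intro x hx; simpa using hx
    | succ p ih =>
        intro x hx
        rw [pow_succ', Module.End.mul_apply]
        exact hRF _ (ih x hx)
  set SR := S ⊓ R with hSR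
  have hSRA : Submodule.map F SR ≤ SR := by
    rintro _ ⟨x, hx, rfl⟩
    exact ⟨hSA x hx.1, hRF x hx.2⟩
  have hfr : finrank ℂ (Submodule.map F SR) = finrank ℂ SR := by
    have hg : LinearMap.range (F ∘ₗ SR.subtype) = Submodule.map F SR := by
      rw [LinearMap.range_comp, Submodule.range_subtype]
    have hkg : LinearMap.ker (F ∘ₗ SR.subtype) = ⊥ := by
      rw [LinearMap.ker_eq_bot']
      intro m hm
      have : (F ^ 1) (SR.subtype m) = 0 := by simpa using hm
      have h0 := hinj 1 (SR.subtype m) m.2.2 this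
      exact Subtype.ext h0
    have := LinearMap.finrank_range_add_finrank_ker (F ∘ₗ SR.subtype)
    rw [hg, hkg, finrank_bot, add_zero] at this
    exact this
  have hSReq : Submodule.map F SR = SR :=
    Submodule.eq_of_le_of_finrank_le hSRA (le_of_eq hfr.symm)
  have hSRm : ∀ m, Submodule.map (F ^ m) SR = SR := by
    intro m
    induction m with
    | zero => rw [pow_zero, Module.End.one_eq_id, Submodule.map_id]
    | succ p ih =>
        rw [pow_succ', Module.End.mul_eq_comp, Submodule.map_comp, ih, hSReq]
  have hrec : ∀ m x, x ∈ R → (F ^ m) x ∈ SR → x ∈ SR := by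
    intro m x hxR hxm
    rw [← hSRm m] at hxm
    obtain ⟨σ, hσ, hσx⟩ := hxm
    have h0 : (F ^ m) (σ - x) = 0 := by rw [map_sub, hσx, sub_self]
    have h1 : σ - x = 0 := hinj m _ (Submodule.sub_mem _ hσ.2 hxR) h0
    rw [sub_eq_zero] at h1
    exact h1 ▸ hσ
  have hsplit : ∀ s ∈ S, ∃ e ∈ S ⊓ E, ∃ ρ ∈ SR, s = e + ρ := by
    intro s hs
    have hs' : s ∈ E ⊔ R := by rw [hcompl.sup_eq_top]; trivial
    obtain ⟨e, he, ρ, hρ, rfl⟩ := Submodule.mem_sup.mp hs'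
    have h1 : (F ^ n) (e + ρ) = (F ^ n) ρ := by
      rw [map_add, LinearMap.mem_ker.mp he, zero_add]
    have h2 : (F ^ n) ρ ∈ SR := by
      rw [← h1]
      exact ⟨hSA' n _ hs, by rw [h1]; exact ⟨ρ, rfl⟩⟩
    have hρSR : ρ ∈ SR := hrec n ρ hρ h2
    exact ⟨e, ⟨by simpa using Submodule.sub_mem _ hs hρSR.1, he⟩, ρ, hρSR, by abel⟩
  ext q
  constructor
  · intro hq
    obtain ⟨x, rfl⟩ := Submodule.mkQ_surjective S q
    rw [LinearMap.mem_ker, Submodule.mkQ_apply, mc_pow_mk, Submodule.Quotient.mk_eq_zero] at hq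
    have hx' : x ∈ E ⊔ R := by rw [hcompl.sup_eq_top]; trivial
    obtain ⟨e, he, ρ, hρ, rfl⟩ := Submodule.mem_sup.mp hx'
    obtain ⟨sE, hsE, sR, hsR, hsum⟩ := hsplit _ hq
    have hFe : (F ^ l) e ∈ E := by
      rw [hE, LinearMap.mem_ker, ← Module.End.mul_apply, pow_mul_comm, Module.End.mul_apply,
        LinearMap.mem_ker.mp he, map_zero]
    have hFρ : (F ^ l) ρ ∈ R := hRFm l ρ hρ
    have hdiff : (F ^ l) e - sE = sR - (F ^ l) ρ := by
      rw [map_add] at hsum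
      linear_combination (norm := abel) hsum
    have hbot : (F ^ l) e - sE = 0 := by
      have hmem : (F ^ l) e - sE ∈ E ⊓ R := by
        refine ⟨Submodule.sub_mem _ hFe hsE.2, ?_⟩
        rw [hdiff]
        exact Submodule.sub_mem _ hsR.2 hFρ
      rw [hcompl.inf_eq_bot, Submodule.mem_bot] at hmem
      exact hmem
    have hFeS : (F ^ l) e ∈ S := by
      rw [sub_eq_zero] at hbot
      rw [hbot]; exact hsE.1
    have hFρSR : (F ^ l) ρ ∈ SR := by
      have h3 : sR - (F ^ l) ρ = 0 := by rw [← hdiff, hbot]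
      rw [sub_eq_zero] at h3
      rw [← h3]; exact hsR
    have hρS : ρ ∈ SR := hrec l ρ hρ hFρSR
    -- identify e
    rw [hE, ker_A_pow M lam k hlam0 hlam1 hn1] at he
    obtain ⟨w, hw, rfl⟩ := Submodule.mem_map.mp he
    have hFe2 : (F ^ l) ((LinearMap.single ℂ (fun _ : Fin r => V) k) w) =
        Pi.single k (lam ^ l • (((M k - 1) ^ l) w)) := by
      rw [hF]
      simp only [LinearMap.coe_single]
      exact A_pow_single M lam k l w
    rw [hFe2] at hFeS
    have hu : M k (lam ^ l • (((M k - 1) ^ l) w)) = lam ^ l • (((M k - 1) ^ l) w) :=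
      Mk_of_single_mem_KL M lam k hlam0 hlam1 hstar hFeS
    have hu0 : (M k - 1) (lam ^ l • (((M k - 1) ^ l) w)) = 0 := by
      rw [LinearMap.sub_apply, Module.End.one_apply, hu, sub_self]
    have hw1 : ((M k - 1) ^ (l + 1)) w = 0 := by
      rw [map_smul, ← Module.End.mul_apply, ← pow_succ'] at hu0
      exact (smul_eq_zero.mp hu0).resolve_left (pow_ne_zero _ hlam0)
    refine Submodule.mem_map.mpr
      ⟨(LinearMap.single ℂ (fun _ : Fin r => V) k) w,
        Submodule.mem_map.mpr ⟨w, LinearMap.mem_ker.mpr hw1, rfl⟩, ?_⟩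
    rw [Submodule.mkQ_apply, Submodule.mkQ_apply]
    refine (Submodule.Quotient.eq S).mpr ?_
    have heρ : (LinearMap.single ℂ (fun _ : Fin r => V) k) w -
        ((LinearMap.single ℂ (fun _ : Fin r => V) k) w + ρ) = -ρ := by abel
    rw [heρ]
    exact Submodule.neg_mem _ hρS.1
  · intro hq
    obtain ⟨y, hy, rfl⟩ := Submodule.mem_map.mp hq
    obtain ⟨w, hw, rfl⟩ := Submodule.mem_map.mp hy
    rw [LinearMap.mem_ker, Submodule.mkQ_apply, mc_pow_mk, Submodule.Quotient.mk_eq_zero]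
    have hFw : ((convOp M lam k - lam • 1) ^ l)
        ((LinearMap.single ℂ (fun _ : Fin r => V) k) w) =
        Pi.single k (lam ^ l • (((M k - 1) ^ l) w)) := by
      simp only [LinearMap.coe_single]
      exact A_pow_single M lam k l w
    rw [hFw]
    have hu : lam ^ l • (((M k - 1) ^ l) w) ∈ LinearMap.ker (M k - 1) := by
      rw [LinearMap.mem_ker, map_smul, ← Module.End.mul_apply, ← pow_succ',
        LinearMap.mem_ker.mp hw, smul_zero]
    rw [KLsub]
    refine Submodule.mem_sup_left (Submodule.mem_iSup_of_mem k ?_)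
    rw [Ksub_eq_map]
    exact Submodule.mem_map.mpr ⟨_, hu, by rw [LinearMap.coe_single]⟩

lemma finrank_ker_mc [FiniteDimensional ℂ V]
    (hlam0 : lam ≠ 0) (hlam1 : lam ≠ 1) (hstar : CondStar M)
    (h : ∀ k : Fin r, KLsub M lam ≤ (KLsub M lam).comap (convOp M lam k)) (l : ℕ) :
    finrank ℂ (LinearMap.ker ((mcOp M lam h k - lam • 1) ^ l)) +
      finrank ℂ (LinearMap.ker (M k - 1)) =
      finrank ℂ (LinearMap.ker ((M k - 1) ^ (l + 1))) := by
  set S := KLsub M lam with hSdef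
  set sgl := LinearMap.single ℂ (fun _ : Fin r => V) k with hsgl
  set Wl := Submodule.map sgl (LinearMap.ker ((M k - 1) ^ (l + 1))) with hWl
  have hsglinj : Function.Injective sgl := fun a b hab =>
    Pi.single_injective k hab
  rw [ker_mc_pow M lam k hlam0 hlam1 hstar h l]
  have h1 : finrank ℂ Wl = finrank ℂ (LinearMap.ker ((M k - 1) ^ (l + 1))) :=
    (LinearEquiv.finrank_eq (Submodule.equivMapOfInjective sgl hsglinj _)).symm
  have hK1le : LinearMap.ker (M k - 1) ≤ LinearMap.ker ((M k - 1) ^ (l + 1)) := by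
    intro u hu
    rw [LinearMap.mem_ker] at hu ⊢
    rw [pow_succ, Module.End.mul_apply, hu, map_zero]
  have h2 : Wl ⊓ S = Submodule.map sgl (LinearMap.ker (M k - 1)) := by
    apply le_antisymm
    · rintro x ⟨hx1, hx2⟩
      obtain ⟨w, hw, rfl⟩ := Submodule.mem_map.mp hx1
      refine Submodule.mem_map.mpr ⟨w, ?_, rfl⟩
      have hmem : Pi.single k w ∈ KLsub M lam := by
        have : sgl w = Pi.single k w := by rw [hsgl, LinearMap.coe_single]
        rwa [this] at hx2
      have := Mk_of_single_mem_KL M lam k hlam0 hlam1 hstar hmem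
      rw [LinearMap.mem_ker, LinearMap.sub_apply, Module.End.one_apply, this, sub_self]
    · refine le_inf (Submodule.map_mono hK1le) ?_
      rintro x hx
      obtain ⟨w, hw, rfl⟩ := Submodule.mem_map.mp hx
      rw [hSdef, KLsub]
      refine Submodule.mem_sup_left (Submodule.mem_iSup_of_mem k ?_)
      rw [Ksub_eq_map]
      exact Submodule.mem_map.mpr ⟨w, hw, rfl⟩
  have h3 : finrank ℂ (Submodule.map S.mkQ Wl) + finrank ℂ ↥(Wl ⊓ S) = finrank ℂ Wl := by
    have hg : LinearMap.range (S.mkQ ∘ₗ Wl.subtype) = Submodule.map S.mkQ Wl := by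
      rw [LinearMap.range_comp, Submodule.range_subtype]
    have hker : LinearMap.ker (S.mkQ ∘ₗ Wl.subtype) = Submodule.comap Wl.subtype S := by
      rw [LinearMap.ker_comp, Submodule.ker_mkQ]
    have h4 := LinearMap.finrank_range_add_finrank_ker (S.mkQ ∘ₗ Wl.subtype)
    rw [hg, hker] at h4
    have h5 : finrank ℂ (Submodule.comap Wl.subtype S) = finrank ℂ ↥(Wl ⊓ S) := by
      rw [← Submodule.map_comap_subtype]
      exact LinearEquiv.finrank_eq
        (Submodule.equivMapOfInjective Wl.subtype (Submodule.injective_subtype Wl) _)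
    rw [h5] at h4
    exact h4
  have h6 : finrank ℂ (Submodule.map sgl (LinearMap.ker (M k - 1))) =
      finrank ℂ (LinearMap.ker (M k - 1)) :=
    (LinearEquiv.finrank_eq (Submodule.equivMapOfInjective sgl hsglinj _)).symm
  rw [h2, h6, h1] at h3
  exact h3

end Aux

/-- for `λ ≠ 0, 1`, the Jordan blocks of `Ñ_k` with eigenvalue `λ` come
exactly from the Jordan blocks `J(1, l+1)` of `M_k` (with length dropped by one):
`dim ker((Ñ_k − λ)^l) − dim ker((Ñ_k − λ)^{l−1}) = dim ker((M_k − 1)^{l+1}) − dim ker((M_k − 1)^l)`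
for all `l ≥ 1`. -/
theorem middle_convolution_jordan_eigenvalue_lambda
    {V : Type*} [AddCommGroup V] [Module ℂ V] [FiniteDimensional ℂ V]
    {r : ℕ} (hr : 1 ≤ r)
    (M : Fin r → Module.End ℂ V) (hM : ∀ i : Fin r, Function.Bijective (M i))
    (hstar : CondStar M) (hstarstar : CondStarStar M)
    (lam : ℂ) (hlam0 : lam ≠ 0) (hlam1 : lam ≠ 1)
    (h : ∀ k : Fin r, KLsub M lam ≤ (KLsub M lam).comap (convOp M lam k))
    (k : Fin r) :
    ∀ l : ℕ, 1 ≤ l →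
      (Module.finrank ℂ (LinearMap.ker ((mcOp M lam h k - lam • 1) ^ l)) : ℤ) -
        (Module.finrank ℂ (LinearMap.ker ((mcOp M lam h k - lam • 1) ^ (l - 1))) : ℤ) =
      (Module.finrank ℂ (LinearMap.ker ((M k - 1) ^ (l + 1))) : ℤ) -
        (Module.finrank ℂ (LinearMap.ker ((M k - 1) ^ l)) : ℤ) := by

  intro l hl
  have e1 := finrank_ker_mc M lam k hlam0 hlam1 hstar h l
  have e2 := finrank_ker_mc M lam k hlam0 hlam1 hstar h (l - 1)
  have hl1 : l - 1 + 1 = l := Nat.succ_pred_eq_of_pos hl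
  rw [hl1] at e2
  omega
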